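/- The greedy algorithm for length-weighted disjoint interval allocation on the path of length l, which processes intervals in order of non-increasing length (ties broken left-to-right) and accepts every interval not sharing an edge with a previously accepted one, achieves total accepted length at least (l/(3l-3)) times the maximum total length of any pairwise edge-disjoint subset; i.e., it is strictly (3 - 3/l)-competitive. -/

import Mathlib

/-- Two integer intervals share a unit edge iff `max` of left ends `<` `min` of right ends. -/
def Blocks (p q : ℕ × ℕ) : Prop := max p.1 q.1 < min p.2 q.2

/-- Total length of a set of intervals. -/
def gain (S : List (ℕ × ℕ)) : ℕ := (S.map fun r => r.2 - r.1).sum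

-- Greedy: accept every interval edge-disjoint from all previously accepted ones.
open scoped Classical in
noncomputable def greedyLW (I : List (ℕ × ℕ)) : List (ℕ × ℕ) :=
  I.foldl (fun acc r => if ∀ q ∈ acc, ¬ Blocks r q then acc ++ [r] else acc) []

open scoped Classical

noncomputable def step (acc : List (ℕ × ℕ)) (r : ℕ × ℕ) : List (ℕ × ℕ) :=
  if ∀ q ∈ acc, ¬ Blocks r q then acc ++ [r] else acc

lemma blocks_self {p : ℕ × ℕ} (h : p.1 < p.2) : Blocks p p := by
  simp [Blocks, h]

lemma blocks_symm {p q : ℕ × ℕ} (h : Blocks p q) : Blocks q p := by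
  rw [Blocks] at *; omega

lemma greedy_aux : ∀ (rest acc : List (ℕ × ℕ)),
    (∀ x ∈ rest, x.1 < x.2) →
    rest.Pairwise (fun p q => q.2 - q.1 < p.2 - p.1 ∨ (q.2 - q.1 = p.2 - p.1 ∧ p.1 ≤ q.1)) →
    (∀ a ∈ acc, ∀ x ∈ rest, x.2 - x.1 ≤ a.2 - a.1) →
    ∃ s : List (ℕ × ℕ), s.Sublist rest ∧ rest.foldl step acc = acc ++ s ∧
      ∀ x ∈ rest, ∃ g ∈ rest.foldl step acc, Blocks x g ∧ x.2 - x.1 ≤ g.2 - g.1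
  | [], acc => by
    intro _ _ _
    exact ⟨[], List.Sublist.refl _, by simp, by simp⟩
  | r :: rest, acc => by
    intro hv hsort hacc
    rw [List.pairwise_cons] at hsort
    obtain ⟨hhd, hsort'⟩ := hsort
    have hlenrest : ∀ x ∈ rest, x.2 - x.1 ≤ r.2 - r.1 := fun x hx => by
      rcases hhd x hx with h | h
      · omega
      · omega
    by_cases h : ∀ q ∈ acc, ¬ Blocks r q
    · have hstep : step acc r = acc ++ [r] := if_pos h
      obtain ⟨s, hs, heq, hspec⟩ := greedy_aux rest (acc ++ [r])
        (fun x hx => hv x (List.mem_cons_of_mem _ hx)) hsort'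
        (by
          intro a ha x hx
          rcases List.mem_append.1 ha with ha | ha
          · exact hacc a ha x (List.mem_cons_of_mem _ hx)
          · simp only [List.mem_singleton] at ha
            subst ha
            exact hlenrest x hx)
      have hres : (r :: rest).foldl step acc = acc ++ (r :: s) := by
        simp [List.foldl_cons, hstep, heq]
      refine ⟨r :: s, hs.cons₂ r, hres, ?_⟩
      intro x hx
      rcases List.mem_cons.1 hx with rfl | hx
      · exact ⟨x, by simp [hres], blocks_self (hv x (List.mem_cons_self)), le_refl _⟩
      · obtain ⟨g, hg, hb, hl⟩ := hspec x hx
        refine ⟨g, ?_, hb, hl⟩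
        rw [hres]
        rw [heq] at hg
        simpa using (by simpa using hg : g ∈ (acc ++ [r]) ++ s)
    · have hstep : step acc r = acc := if_neg h
      push_neg at h
      obtain ⟨q, hq, hbq⟩ := h
      obtain ⟨s, hs, heq, hspec⟩ := greedy_aux rest acc
        (fun x hx => hv x (List.mem_cons_of_mem _ hx)) hsort'
        (fun a ha x hx => hacc a ha x (List.mem_cons_of_mem _ hx))
      have hres : (r :: rest).foldl step acc = acc ++ s := by
        simp [List.foldl_cons, hstep, heq]
      refine ⟨s, hs.cons r, hres, ?_⟩
      intro x hx
      rcases List.mem_cons.1 hx with rfl | hx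
      · exact ⟨q, by rw [hres]; exact List.mem_append_left _ hq, hbq,
          hacc q hq x (List.mem_cons_self)⟩
      · obtain ⟨g, hg, hb, hl⟩ := hspec x hx
        exact ⟨g, by rw [hres, ← heq]; exact hg, hb, hl⟩

lemma core (l : ℕ) (hl : 2 ≤ l) (g : ℕ × ℕ) (hg1 : g.1 < g.2) (hg2 : g.2 ≤ l)
    (T : Finset (ℕ × ℕ))
    (hv : ∀ r ∈ T, r.1 < r.2 ∧ r.2 ≤ l)
    (hdisj : ∀ r ∈ T, ∀ r' ∈ T, r ≠ r' → ¬ Blocks r r')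
    (hblk : ∀ r ∈ T, Blocks r g)
    (hlen : ∀ r ∈ T, r.2 - r.1 ≤ g.2 - g.1) :
    l * (∑ r ∈ T, (r.2 - r.1)) ≤ (3 * l - 3) * (g.2 - g.1) := by
  set L := g.2 - g.1 with hLdef
  have hL1 : 1 ≤ L := by omega
  have hLl : L ≤ l := by omega
  have hdis : ∀ r ∈ T, ∀ r' ∈ T, r ≠ r' →
      Disjoint (Finset.Ico r.1 r.2) (Finset.Ico r'.1 r'.2) := by
    intro r hr r' hr' hne
    have hnb := hdisj r hr r' hr' hne
    rw [Blocks] at hnb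
    rw [Finset.disjoint_iff_inter_eq_empty, Finset.Ico_inter_Ico]
    exact Finset.Ico_eq_empty (by omega)
  have hsum : ∑ r ∈ T, (r.2 - r.1) = (T.biUnion fun r => Finset.Ico r.1 r.2).card := by
    rw [Finset.card_biUnion hdis]
    exact Finset.sum_congr rfl fun r _ => (Nat.card_Ico _ _).symm
  have hb1 : ∑ r ∈ T, (r.2 - r.1) ≤ l := by
    rw [hsum]
    have hsub1 : (T.biUnion fun r => Finset.Ico r.1 r.2) ⊆ Finset.Ico 0 l := by
      intro e he
      simp only [Finset.mem_biUnion, Finset.mem_Ico] at he ⊢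
      obtain ⟨r, hr, h1, h2⟩ := he
      exact ⟨Nat.zero_le _, lt_of_lt_of_le h2 (hv r hr).2⟩
    simpa using Finset.card_le_card hsub1
  have hb2 : ∑ r ∈ T, (r.2 - r.1) ≤ 3 * L - 2 := by
    rw [hsum]
    have hsub2 : (T.biUnion fun r => Finset.Ico r.1 r.2) ⊆
        Finset.Ico (g.1 + 1 - L) (g.2 - 1 + L) := by
      intro e he
      simp only [Finset.mem_biUnion, Finset.mem_Ico] at he ⊢
      obtain ⟨r, hr, h1, h2⟩ := he
      have hb := hblk r hr
      rw [Blocks] at hb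
      have h3 := hlen r hr
      have h4 := (hv r hr).1
      omega
    have := Finset.card_le_card hsub2
    rw [Nat.card_Ico] at this
    omega
  set m := ∑ r ∈ T, (r.2 - r.1) with hm
  have hbz1 : (m : ℤ) ≤ l := by exact_mod_cast hb1
  have hbz2 : (m : ℤ) ≤ 3 * L - 2 := by
    have : (m : ℤ) ≤ ((3 * L - 2 : ℕ) : ℤ) := by exact_mod_cast hb2
    omega
  have hLz1 : (1 : ℤ) ≤ L := by exact_mod_cast hL1
  have hLzl : (L : ℤ) ≤ l := by exact_mod_cast hLl
  have hlz : (2 : ℤ) ≤ l := by exact_mod_cast hl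
  have hgoal : (l : ℤ) * m ≤ (3 * l - 3) * L := by
    rcases le_or_gt (3 * (L : ℤ)) (2 * l) with h | h
    · nlinarith [mul_nonneg (by positivity : (0:ℤ) ≤ (l:ℤ)) (by linarith : (0:ℤ) ≤ 3 * (L:ℤ) - 2 - m)]
    · nlinarith [mul_nonneg (by linarith : (0:ℤ) ≤ (l:ℤ) - 1) (by linarith : (0:ℤ) ≤ 3 * (L:ℤ) - 2 * l - 1),
        mul_nonneg (by positivity : (0:ℤ) ≤ (l:ℤ)) (by linarith : (0:ℤ) ≤ (l:ℤ) - m),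
        sq_nonneg ((l:ℤ) - 1)]
  have hcast : ((3 * l - 3 : ℕ) : ℤ) = 3 * (l : ℤ) - 3 := by omega
  exact_mod_cast hcast ▸ hgoal

/-- Greedy on intervals sorted by non-increasing length (ties left-to-right) is strictly
`(3 - 3/l)`-competitive for length-weighted disjoint interval allocation:
`l * OPT ≤ (3l - 3) * GREEDY`. -/
theorem stmt_8 (l : ℕ) (hl : 2 ≤ l) (I : List (ℕ × ℕ))
    (hval : ∀ r ∈ I, r.1 < r.2 ∧ r.2 ≤ l) (hnd : I.Nodup)
    (hsort : I.Pairwise fun p q =>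
      q.2 - q.1 < p.2 - p.1 ∨ (q.2 - q.1 = p.2 - p.1 ∧ p.1 ≤ q.1)) :
    ∀ S : List (ℕ × ℕ), S.Sublist I → S.Pairwise (fun p q => ¬ Blocks p q) →
      l * gain S ≤ (3 * l - 3) * gain (greedyLW I) := by
  intro S hS hSpair
  have hGdef : greedyLW I = I.foldl step [] := rfl
  obtain ⟨s, hsub, heq, hspec⟩ := greedy_aux I []
    (fun x hx => (hval x hx).1) hsort (by simp)
  have hG : greedyLW I = s := by rw [hGdef, heq]; simp
  have hSI : ∀ x ∈ S, x ∈ I := fun x hx => hS.subset hx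
  have hsI : ∀ x ∈ s, x ∈ I := fun x hx => hsub.subset hx
  have hspec' : ∀ x ∈ S, ∃ g ∈ s, Blocks x g ∧ x.2 - x.1 ≤ g.2 - g.1 := by
    intro x hx
    obtain ⟨g, hg, h1, h2⟩ := hspec x (hSI x hx)
    rw [heq] at hg
    simp only [List.nil_append] at hg
    exact ⟨g, hg, h1, h2⟩
  set φ : ℕ × ℕ → ℕ × ℕ := fun x =>
    if h : ∃ g ∈ s, Blocks x g ∧ x.2 - x.1 ≤ g.2 - g.1 then h.choose else x with hφdef
  have hφ : ∀ x ∈ S, φ x ∈ s ∧ Blocks x (φ x) ∧ x.2 - x.1 ≤ (φ x).2 - (φ x).1 := by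
    intro x hx
    have h := hspec' x hx
    simp only [hφdef, dif_pos h]
    exact h.choose_spec
  have hSnd : S.Nodup := hnd.sublist hS
  have hsnd : s.Nodup := hnd.sublist hsub
  have hgainS : gain S = ∑ r ∈ S.toFinset, (r.2 - r.1) :=
    (List.sum_toFinset _ hSnd).symm
  have hgains : gain s = ∑ r ∈ s.toFinset, (r.2 - r.1) :=
    (List.sum_toFinset _ hsnd).symm
  have hmaps : ∀ x ∈ S.toFinset, φ x ∈ s.toFinset := by
    intro x hx
    rw [List.mem_toFinset] at *
    exact (hφ x hx).1
  have hfib := Finset.sum_fiberwise_of_maps_to hmaps (fun r => r.2 - r.1)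
  have hpairS : ∀ r ∈ S, ∀ r' ∈ S, r ≠ r' → ¬ Blocks r r' := by
    have hsym : Symmetric fun p q : ℕ × ℕ => ¬ Blocks p q :=
      fun p q h hb => h (blocks_symm hb)
    intro r hr r' hr' hne
    exact (haveI : Std.Symm (fun p q : ℕ × ℕ => ¬ Blocks p q) := ⟨fun a b h => hsym h⟩; hSpair.forall hr hr' hne)
  have key : ∀ g ∈ s.toFinset,
      l * ∑ r ∈ S.toFinset.filter (fun r => φ r = g), (r.2 - r.1) ≤
        (3 * l - 3) * (g.2 - g.1) := by
    intro g hg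
    rw [List.mem_toFinset] at hg
    have hgI := hval g (hsI g hg)
    have hmem : ∀ r ∈ S.toFinset.filter (fun r => φ r = g), r ∈ S ∧ φ r = g := by
      intro r hr
      rw [Finset.mem_filter, List.mem_toFinset] at hr
      exact hr
    refine core l hl g hgI.1 hgI.2 _ ?_ ?_ ?_ ?_
    · intro r hr
      exact hval r (hSI r (hmem r hr).1)
    · intro r hr r' hr' hne
      exact hpairS r (hmem r hr).1 r' (hmem r' hr').1 hne
    · intro r hr
      have h := (hφ r (hmem r hr).1).2.1
      rwa [(hmem r hr).2] at h
    · intro r hr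
      have h := (hφ r (hmem r hr).1).2.2
      rwa [(hmem r hr).2] at h
  calc l * gain S = ∑ g ∈ s.toFinset,
        l * ∑ r ∈ S.toFinset.filter (fun r => φ r = g), (r.2 - r.1) := by
        rw [hgainS, ← hfib, Finset.mul_sum]
    _ ≤ ∑ g ∈ s.toFinset, (3 * l - 3) * (g.2 - g.1) := Finset.sum_le_sum key
    _ = (3 * l - 3) * gain (greedyLW I) := by rw [hG, hgains, Finset.mul_sum]
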